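/- (Cooperative phase recovery step) Assume h ≥ 2. Fix distinct indices p, q ∈ {0, …, n−1} (the failed node p = i_j and another failed node i_l with i_l = q) and l ∈ {1, …, h}. If two codewords c, c' ∈ C satisfy: (i) c_{p,b,a} = c'_{p,b,a} for all b ∈ {1, …, d−k} and all a ∈ {0, …, s−1}^n; (ii) c_{p,d−k+l,a} = c'_{p,d−k+l,a} for all a ∈ V_q; and (iii) c_{p,b,a} + c_{p,d−k+l,a(q,b)} = c'_{p,b,a} + c'_{p,d−k+l,a(q,b)} for all b ∈ {1, …, d−k} and all a ∈ V_q; then c_{p,d−k+l,a} = c'_{p,d−k+l,a} for all a ∈ {0, …, s−1}^n. -/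

import Mathlib

open Finset

/-- The code `C` of Construction 1: arrays `c = (c_{i,b,a})` with `i ∈ [0,n)`,
`b ∈ {1,…,B}` (here `B = d-k+h`; entries of `c` with `b` outside this range are
irrelevant), and `a ∈ {0,…,s-1}^n`, satisfying the parity-check equations
`∑_i λ_i^t c_{i,b,a} + ∑_i δ(a_i) ∑_{e=1}^{s-1} μ_e^t c_{i,b,a(i,e)} = 0`
for all `t ∈ [0,r)`, all `b ∈ {1,…,B}`, and all `a`. -/
def codeC {F : Type*} [Field F] (n r s B : ℕ) (lam : Fin n → F) (mu : Fin s → F)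
    (c : Fin n → ℕ → (Fin n → Fin s) → F) : Prop :=
  ∀ t < r, ∀ b : ℕ, 1 ≤ b → b ≤ B → ∀ a : Fin n → Fin s,
    ∑ i, lam i ^ t * c i b a
      + ∑ i, (if (a i : ℕ) = 0 then
          ∑ e ∈ univ.filter (fun e : Fin s => (e : ℕ) ≠ 0),
            mu e ^ t * c i b (Function.update a i e)
        else 0) = 0

/-- Cooperative phase recovery step: `p` is a failed node and `q` another
failed node, `l ∈ {1,…,h}`.  If two codewords of `C` agree on (i) node `p`'s
symbols in every layer `b ∈ {1,…,d-k}`, (ii) node `p`'s layer-`(d-k+l)` symbols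
`c_{p,d-k+l,a}` for `a ∈ V_q`, and (iii) the sums
`c_{p,b,a} + c_{p,d-k+l,a(q,b)}` for `b ∈ {1,…,d-k}` and `a ∈ V_q`, then they
agree on all of node `p`'s layer-`(d-k+l)` symbols. -/
theorem cooperative_phase_step
    {F : Type*} [Field F] [Fintype F]
    (n k d h r s N : ℕ) (hk0 : 0 < k) (hr0 : 0 < r) (hh : 1 ≤ h)
    (hnk : n = k + r) (hkd : k < d) (hdn : d + h ≤ n)
    (hs : s = d - k + 1) (hN : N = (d - k + h) * s ^ n)
    (lam : Fin n → F) (mu : Fin s → F)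
    (hlam : Function.Injective lam)
    (hmu : ∀ e e' : Fin s, (e : ℕ) ≠ 0 → (e' : ℕ) ≠ 0 → mu e = mu e' → e = e')
    (hlammu : ∀ (i : Fin n) (e : Fin s), (e : ℕ) ≠ 0 → lam i ≠ mu e)
    (c c' : Fin n → ℕ → (Fin n → Fin s) → F)
    (hc : codeC n r s (d - k + h) lam mu c) (hc' : codeC n r s (d - k + h) lam mu c')
    (p q : Fin n) (hpq : p ≠ q)
    (l : ℕ) (hl1 : 1 ≤ l) (hl2 : l ≤ h)
    (h1 : ∀ (b : ℕ) (hb : 1 ≤ b) (hb' : b ≤ d - k), ∀ a : Fin n → Fin s,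
      c p b a = c' p b a)
    (h2 : ∀ a : Fin n → Fin s, (a q : ℕ) = 0 →
      c p (d - k + l) a = c' p (d - k + l) a)
    (h3 : ∀ (b : ℕ) (hb : 1 ≤ b) (hb' : b ≤ d - k), ∀ a : Fin n → Fin s,
      (a q : ℕ) = 0 →
        c p b a + c p (d - k + l) (Function.update a q ⟨b, by omega⟩)
          = c' p b a + c' p (d - k + l) (Function.update a q ⟨b, by omega⟩)) :
    ∀ a : Fin n → Fin s, c p (d - k + l) a = c' p (d - k + l) a := by
  intro a
  by_cases h0 : (a q : ℕ) = 0
  · exact h2 a h0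
  · set b : ℕ := (a q : ℕ) with hb
    have hblt : b < s := (a q).isLt
    have hb1 : 1 ≤ b := Nat.one_le_iff_ne_zero.mpr h0
    have hb2 : b ≤ d - k := by omega
    set a0 : Fin n → Fin s := Function.update a q ⟨0, by omega⟩ with ha0
    have ha0q : (a0 q : ℕ) = 0 := by simp [ha0]
    have hupd : Function.update a0 q (⟨b, by omega⟩ : Fin s) = a := by
      funext i
      by_cases hi : i = q
      · subst hi; simp [ha0]; exact Fin.ext hb
      · simp [ha0, Function.update_of_ne hi]
    have := h3 b hb1 hb2 a0 ha0q
    rw [hupd, h1 b hb1 hb2 a0] at this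
    exact add_left_cancel this
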